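/- Let Θ ⊆ ℝ^p and Z be nonempty sets, let δ ∈ (0,1), and let f, f̃ : Z × ℝ^p → ℝ be such that for each z ∈ Z the maps θ ↦ f(z,θ) and θ ↦ f̃(z,θ) are twice differentiable, with f(z,θ) ≥ δ and f̃(z,θ) ≥ δ for all z ∈ Z, θ ∈ Θ, and with M₁ := sup_{z,θ} ‖∇_θ f(z,θ)‖ < ∞ and M₂ := sup_{z,θ} ‖∇_{θθ} f(z,θ)‖ < ∞ (suprema over z ∈ Z, θ ∈ Θ). Set C₂(f) := 4(1 + M₁² + M₂)/δ³. Then for every n ≥ 1 and every z₁, …, z_n ∈ Z, sup_{θ∈Θ} ‖(1/n) Σ_{i=1}^n ∇_{θθ} log f̃(z_i,θ) − (1/n) Σ_{i=1}^n ∇_{θθ} log f(z_i,θ)‖ ≤ C₂(f) · ( sup_{z,θ}|f̃ − f| + sup_{z,θ}‖∇_θ f̃ − ∇_θ f‖ + (sup_{z,θ}‖∇_θ f̃ − ∇_θ f‖)² + sup_{z,θ}‖∇_{θθ} f̃ − ∇_{θθ} f‖ ), provided the suprema on the right-hand side are finite. -/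

import Mathlib

open ContinuousLinearMap

set_option maxHeartbeats 2000000
set_option synthInstance.maxHeartbeats 400000

lemma scal_bound (D M1 M2 e0 e1 e2 : ℝ) (hD : 1 ≤ D) (hM1 : 0 ≤ M1) (hM2 : 0 ≤ M2)
    (he0 : 0 ≤ e0) (he1 : 0 ≤ e1) (he2 : 0 ≤ e2) :
    D * e2 + e0 * D^2 * M2 + D^2 * (e1 * (M1 + e1) + M1 * e1) + 2 * e0 * D^3 * M1^2 ≤
      4 * (1 + M1^2 + M2) * D^3 * (e0 + e1 + e1^2 + e2) := by
  have hD0 : 0 < D := lt_of_lt_of_le one_pos hD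
  have h2 : D^2 ≤ D^3 := by
    calc D^2 = D^2 * 1 := by ring
    _ ≤ D^2 * D := by nlinarith
    _ = D^3 := by ring
  have h1 : D ≤ D^3 := by nlinarith [sq_nonneg (D-1)]
  have key : e2 + e0 * M2 + (e1 * (M1 + e1) + M1 * e1) + 2 * e0 * M1^2 ≤
      4 * (1 + M1^2 + M2) * (e0 + e1 + e1^2 + e2) := by
    nlinarith [sq_nonneg (M1 - 1), mul_nonneg he0 hM2, mul_nonneg he0 (sq_nonneg M1),
      mul_nonneg he1 (sq_nonneg (M1 - 1)), mul_nonneg he2 hM2, mul_nonneg he2 (sq_nonneg M1),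
      mul_nonneg he0 hM1, mul_nonneg he1 hM1, sq_nonneg e1,
      mul_nonneg (mul_nonneg he0 hM1) hM1]
  calc D * e2 + e0 * D^2 * M2 + D^2 * (e1 * (M1 + e1) + M1 * e1) + 2 * e0 * D^3 * M1^2
      ≤ D^3 * e2 + e0 * D^3 * M2 + D^3 * (e1 * (M1 + e1) + M1 * e1) + 2 * e0 * D^3 * M1^2 := by
        have : 0 ≤ e1 * (M1 + e1) + M1 * e1 := by positivity
        nlinarith [mul_nonneg he0 hM2]
    _ = D^3 * (e2 + e0 * M2 + (e1 * (M1 + e1) + M1 * e1) + 2 * e0 * M1^2) := by ring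
    _ ≤ D^3 * (4 * (1 + M1^2 + M2) * (e0 + e1 + e1^2 + e2)) := by
        apply mul_le_mul_of_nonneg_left key (by positivity)
    _ = 4 * (1 + M1^2 + M2) * D^3 * (e0 + e1 + e1^2 + e2) := by ring

lemma fderiv_inv_comp {E : Type*} [NormedAddCommGroup E] [NormedSpace ℝ E]
    (g : E → ℝ) (θ : E) (hg : DifferentiableAt ℝ g θ) (hne : g θ ≠ 0) :
    fderiv ℝ (fun x => (g x)⁻¹) θ = -(g θ ^ 2)⁻¹ • fderiv ℝ g θ := by
  have h := ((hasFDerivAt_inv hne).comp θ hg.hasFDerivAt).fderiv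
  have h2 : fderiv ℝ (fun x => (g x)⁻¹) θ = fderiv ℝ ((fun x => x⁻¹) ∘ g) θ := rfl
  rw [h2, h]
  ext w
  simp [mul_comm]

lemma hessian_log_eq {E : Type*} [NormedAddCommGroup E] [NormedSpace ℝ E]
    (g : E → ℝ) (hg : Differentiable ℝ g) (hg2 : Differentiable ℝ (fderiv ℝ g))
    (θ : E) (hθ : 0 < g θ) :
    fderiv ℝ (fderiv ℝ (fun x => Real.log (g x))) θ =
      (g θ)⁻¹ • fderiv ℝ (fderiv ℝ g) θ +
      (-(g θ ^ 2)⁻¹ • fderiv ℝ g θ).smulRight (fderiv ℝ g θ) := by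
  have hne : g θ ≠ 0 := ne_of_gt hθ
  have hev : ∀ᶠ x in nhds θ, g x ≠ 0 := (hg.continuous.continuousAt (x := θ)).eventually_ne hne
  have h1 : fderiv ℝ (fun x => Real.log (g x)) =ᶠ[nhds θ] fun x => (g x)⁻¹ • fderiv ℝ g x := by
    filter_upwards [hev] with x hx
    exact ((hg x).hasFDerivAt.log hx).fderiv
  rw [h1.fderiv_eq, fderiv_fun_smul (c := fun x => (g x)⁻¹) ((hg θ).inv hne) (hg2 θ),
    fderiv_inv_comp g θ (hg θ) hne]

lemma key_bound {E : Type*} [NormedAddCommGroup E] [NormedSpace ℝ E]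
    (a b : ℝ) (u v : E →L[ℝ] ℝ) (A B : E →L[ℝ] (E →L[ℝ] ℝ))
    (δ M1 M2 e0 e1 e2 : ℝ) (hδ0 : 0 < δ) (hδ1 : δ < 1)
    (ha : δ ≤ a) (hb : δ ≤ b) (hu : ‖u‖ ≤ M1) (hA : ‖A‖ ≤ M2)
    (h0 : |b - a| ≤ e0) (h1 : ‖v - u‖ ≤ e1) (h2 : ‖B - A‖ ≤ e2) :
    ‖(b⁻¹ • B + (-(b^2)⁻¹ • v).smulRight v) - (a⁻¹ • A + (-(a^2)⁻¹ • u).smulRight u)‖ ≤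
      4 * (1 + M1^2 + M2) / δ^3 * (e0 + e1 + e1^2 + e2) := by
  have inst : NormSMulClass ℝ (E →L[ℝ] E →L[ℝ] ℝ) :=
    NormedSpace.toNormSMulClass (𝕜 := ℝ) (E := E →L[ℝ] E →L[ℝ] ℝ)
  have ha0 : 0 < a := lt_of_lt_of_le hδ0 ha
  have hb0 : 0 < b := lt_of_lt_of_le hδ0 hb
  have hM1 : 0 ≤ M1 := le_trans (norm_nonneg u) hu
  have hM2 : 0 ≤ M2 := le_trans (norm_nonneg A) hA
  have he0 : 0 ≤ e0 := le_trans (abs_nonneg _) h0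
  have he1 : 0 ≤ e1 := le_trans (norm_nonneg _) h1
  have he2 : 0 ≤ e2 := le_trans (norm_nonneg (B - A)) h2
  set D := δ⁻¹ with hDdef
  have hD0 : 0 < D := inv_pos.2 hδ0
  have hD1 : 1 ≤ D := one_le_inv_iff₀.2 ⟨hδ0, le_of_lt hδ1⟩
  have hbinv : |b⁻¹| ≤ D := by
    rw [abs_of_pos (inv_pos.2 hb0)]
    exact inv_anti₀ hδ0 hb
  have habinv : |b⁻¹ - a⁻¹| ≤ e0 * D^2 := by
    have heq : b⁻¹ - a⁻¹ = (a - b) / (a * b) := by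
      rw [inv_sub_inv hb0.ne' ha0.ne', mul_comm]
    rw [heq, abs_div, abs_of_pos (mul_pos ha0 hb0), abs_sub_comm]
    rw [div_le_iff₀ (mul_pos ha0 hb0)]
    calc |b - a| ≤ e0 := h0
      _ = e0 * (D^2 * δ^2) := by
          rw [hDdef]; field_simp
      _ ≤ e0 * (D^2 * (a * b)) := by
          apply mul_le_mul_of_nonneg_left _ he0
          apply mul_le_mul_of_nonneg_left _ (by positivity)
          calc δ^2 = δ * δ := sq δ
            _ ≤ a * b := mul_le_mul ha hb (le_of_lt hδ0) (le_of_lt ha0)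
      _ = e0 * D^2 * (a * b) := by ring
  have hb2inv : |(b^2)⁻¹| ≤ D^2 := by
    rw [abs_of_pos (by positivity)]
    have : δ^2 ≤ b^2 := by nlinarith
    calc (b^2)⁻¹ ≤ (δ^2)⁻¹ := inv_anti₀ (by positivity) this
      _ = D^2 := by rw [hDdef]; rw [inv_pow]
  have hab2inv : |(b^2)⁻¹ - (a^2)⁻¹| ≤ 2 * e0 * D^3 := by
    have heq : (b^2)⁻¹ - (a^2)⁻¹ = (b⁻¹ - a⁻¹) * (b⁻¹ + a⁻¹) := by
      field_simp; ring
    rw [heq, abs_mul]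
    have hsum : |b⁻¹ + a⁻¹| ≤ 2 * D := by
      rw [abs_of_pos (by positivity)]
      have h1' : b⁻¹ ≤ D := inv_anti₀ hδ0 hb
      have h2' : a⁻¹ ≤ D := inv_anti₀ hδ0 ha
      linarith
    calc |b⁻¹ - a⁻¹| * |b⁻¹ + a⁻¹| ≤ (e0 * D^2) * (2 * D) :=
          mul_le_mul habinv hsum (abs_nonneg _) (by positivity)
      _ = 2 * e0 * D^3 := by ring
  have hv : ‖v‖ ≤ M1 + e1 := by
    have huv : u + (v - u) = v := by abel
    calc ‖v‖ = ‖u + (v - u)‖ := by rw [huv]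
      _ ≤ ‖u‖ + ‖v - u‖ := norm_add_le _ _
      _ ≤ M1 + e1 := add_le_add hu h1
  have decomp : (b⁻¹ • B + (-(b^2)⁻¹ • v).smulRight v) - (a⁻¹ • A + (-(a^2)⁻¹ • u).smulRight u)
      = (b⁻¹ • (B - A) + (b⁻¹ - a⁻¹) • A)
        - ((b^2)⁻¹ • ((v - u).smulRight v + u.smulRight (v - u))
           + ((b^2)⁻¹ - (a^2)⁻¹) • (u.smulRight u)) := by
    ext w x
    simp only [ContinuousLinearMap.add_apply, ContinuousLinearMap.sub_apply,
      ContinuousLinearMap.smul_apply, ContinuousLinearMap.smulRight_apply,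
      ContinuousLinearMap.coe_sub', Pi.sub_apply, smul_eq_mul]
    ring
  rw [decomp]
  have step : ‖(b⁻¹ • (B - A) + (b⁻¹ - a⁻¹) • A)
        - ((b^2)⁻¹ • ((v - u).smulRight v + u.smulRight (v - u))
           + ((b^2)⁻¹ - (a^2)⁻¹) • (u.smulRight u))‖
      ≤ D * e2 + e0 * D^2 * M2 + D^2 * (e1 * (M1 + e1) + M1 * e1) + 2 * e0 * D^3 * M1^2 := by
    have t1 : ‖b⁻¹ • (B - A)‖ ≤ D * e2 := by
      rw [norm_smul b⁻¹ (B - A)]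
      exact mul_le_mul hbinv h2 (norm_nonneg (B - A)) (le_of_lt hD0)
    have t2 : ‖(b⁻¹ - a⁻¹) • A‖ ≤ e0 * D^2 * M2 := by
      rw [norm_smul (b⁻¹ - a⁻¹) A]
      exact mul_le_mul habinv hA (norm_nonneg A) (by positivity)
    have t3 : ‖(b^2)⁻¹ • ((v - u).smulRight v + u.smulRight (v - u))‖
        ≤ D^2 * (e1 * (M1 + e1) + M1 * e1) := by
      rw [norm_smul ((b^2)⁻¹) ((v - u).smulRight v + u.smulRight (v - u))]
      apply mul_le_mul hb2inv _ (norm_nonneg ((v - u).smulRight v + u.smulRight (v - u))) (by positivity)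
      calc ‖(v - u).smulRight v + u.smulRight (v - u)‖
          ≤ ‖(v - u).smulRight v‖ + ‖u.smulRight (v - u)‖ :=
            norm_add_le ((v - u).smulRight v) (u.smulRight (v - u))
        _ = ‖v - u‖ * ‖v‖ + ‖u‖ * ‖v - u‖ := by
            rw [norm_smulRight_apply, norm_smulRight_apply]
        _ ≤ e1 * (M1 + e1) + M1 * e1 := by
            apply add_le_add
            · exact mul_le_mul h1 hv (norm_nonneg _) he1
            · exact mul_le_mul hu h1 (norm_nonneg _) hM1
    have t4 : ‖((b^2)⁻¹ - (a^2)⁻¹) • (u.smulRight u)‖ ≤ 2 * e0 * D^3 * M1^2 := by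
      rw [norm_smul ((b^2)⁻¹ - (a^2)⁻¹) (u.smulRight u), norm_smulRight_apply]
      calc |(b^2)⁻¹ - (a^2)⁻¹| * (‖u‖ * ‖u‖)
          ≤ (2 * e0 * D^3) * (M1 * M1) := by
            apply mul_le_mul hab2inv _ (by positivity) (by positivity)
            exact mul_le_mul hu hu (norm_nonneg _) hM1
        _ = 2 * e0 * D^3 * M1^2 := by ring
    have s1 := norm_sub_le (b⁻¹ • (B - A) + (b⁻¹ - a⁻¹) • A)
      ((b^2)⁻¹ • ((v - u).smulRight v + u.smulRight (v - u))
        + ((b^2)⁻¹ - (a^2)⁻¹) • (u.smulRight u))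
    have s2 := norm_add_le (b⁻¹ • (B - A)) ((b⁻¹ - a⁻¹) • A)
    have s3 := norm_add_le ((b^2)⁻¹ • ((v - u).smulRight v + u.smulRight (v - u)))
      (((b^2)⁻¹ - (a^2)⁻¹) • (u.smulRight u))
    linarith
  refine step.trans ?_
  have heq : 4 * (1 + M1^2 + M2) / δ^3 * (e0 + e1 + e1^2 + e2)
      = 4 * (1 + M1^2 + M2) * D^3 * (e0 + e1 + e1^2 + e2) := by
    rw [hDdef, div_eq_mul_inv, inv_pow]
  rw [heq]
  exact scal_bound D M1 M2 e0 e1 e2 hD1 hM1 hM2 he0 he1 he2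

lemma norm_gradient_eq {F : Type*} [NormedAddCommGroup F] [InnerProductSpace ℝ F]
    [CompleteSpace F] (g : F → ℝ) (x : F) : ‖gradient g x‖ = ‖fderiv ℝ g x‖ := by
  rw [gradient, LinearIsometryEquiv.norm_map]

lemma norm_gradient_sub_eq {F : Type*} [NormedAddCommGroup F] [InnerProductSpace ℝ F]
    [CompleteSpace F] (g h : F → ℝ) (x : F) :
    ‖gradient g x - gradient h x‖ = ‖fderiv ℝ g x - fderiv ℝ h x‖ := by
  rw [gradient, gradient, ← map_sub, LinearIsometryEquiv.norm_map]

theorem stmt_8 {p : ℕ} {Z : Type*} [Nonempty Z]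
    (Θ : Set (EuclideanSpace ℝ (Fin p))) (hΘ : Θ.Nonempty)
    (δ : ℝ) (hδ0 : 0 < δ) (hδ1 : δ < 1)
    (f ft : Z → EuclideanSpace ℝ (Fin p) → ℝ)
    (hfd : ∀ z, Differentiable ℝ (f z)) (hfd2 : ∀ z, Differentiable ℝ (fderiv ℝ (f z)))
    (hftd : ∀ z, Differentiable ℝ (ft z)) (hftd2 : ∀ z, Differentiable ℝ (fderiv ℝ (ft z)))
    (hf : ∀ z, ∀ θ ∈ Θ, δ ≤ f z θ) (hft : ∀ z, ∀ θ ∈ Θ, δ ≤ ft z θ)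
    (hM1 : BddAbove {x : ℝ | ∃ z, ∃ θ ∈ Θ, x = ‖gradient (f z) θ‖})
    (hM2 : BddAbove {x : ℝ | ∃ z, ∃ θ ∈ Θ, x = ‖fderiv ℝ (fderiv ℝ (f z)) θ‖})
    (hbdd0 : BddAbove {x : ℝ | ∃ z, ∃ θ ∈ Θ, x = |ft z θ - f z θ|})
    (hbdd1 : BddAbove {x : ℝ | ∃ z, ∃ θ ∈ Θ, x = ‖gradient (ft z) θ - gradient (f z) θ‖})
    (hbdd2 : BddAbove {x : ℝ | ∃ z, ∃ θ ∈ Θ,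
      x = ‖fderiv ℝ (fderiv ℝ (ft z)) θ - fderiv ℝ (fderiv ℝ (f z)) θ‖})
    (n : ℕ) (hn : 1 ≤ n) (zi : Fin n → Z) :
    sSup ((fun θ =>
        ‖(n : ℝ)⁻¹ • ∑ i, fderiv ℝ (fderiv ℝ (fun θ' => Real.log (ft (zi i) θ'))) θ -
          (n : ℝ)⁻¹ • ∑ i, fderiv ℝ (fderiv ℝ (fun θ' => Real.log (f (zi i) θ'))) θ‖) '' Θ) ≤
      (4 * (1 + sSup {x : ℝ | ∃ z, ∃ θ ∈ Θ, x = ‖gradient (f z) θ‖} ^ 2 +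
          sSup {x : ℝ | ∃ z, ∃ θ ∈ Θ, x = ‖fderiv ℝ (fderiv ℝ (f z)) θ‖}) / δ ^ 3) *
        (sSup {x : ℝ | ∃ z, ∃ θ ∈ Θ, x = |ft z θ - f z θ|} +
          sSup {x : ℝ | ∃ z, ∃ θ ∈ Θ, x = ‖gradient (ft z) θ - gradient (f z) θ‖} +
          sSup {x : ℝ | ∃ z, ∃ θ ∈ Θ, x = ‖gradient (ft z) θ - gradient (f z) θ‖} ^ 2 +
          sSup {x : ℝ | ∃ z, ∃ θ ∈ Θ,
            x = ‖fderiv ℝ (fderiv ℝ (ft z)) θ - fderiv ℝ (fderiv ℝ (f z)) θ‖}) := by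
  obtain ⟨θ₀, hθ₀⟩ := hΘ
  set M1 := sSup {x : ℝ | ∃ z, ∃ θ ∈ Θ, x = ‖gradient (f z) θ‖} with hM1def
  set M2 := sSup {x : ℝ | ∃ z, ∃ θ ∈ Θ, x = ‖fderiv ℝ (fderiv ℝ (f z)) θ‖} with hM2def
  set e0 := sSup {x : ℝ | ∃ z, ∃ θ ∈ Θ, x = |ft z θ - f z θ|} with he0def
  set e1 := sSup {x : ℝ | ∃ z, ∃ θ ∈ Θ, x = ‖gradient (ft z) θ - gradient (f z) θ‖} with he1def
  set e2 := sSup {x : ℝ | ∃ z, ∃ θ ∈ Θ,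
      x = ‖fderiv ℝ (fderiv ℝ (ft z)) θ - fderiv ℝ (fderiv ℝ (f z)) θ‖} with he2def
  set K := 4 * (1 + M1 ^ 2 + M2) / δ ^ 3 * (e0 + e1 + e1 ^ 2 + e2) with hKdef
  have hpt : ∀ z, ∀ θ ∈ Θ, ‖fderiv ℝ (fderiv ℝ (fun θ' => Real.log (ft z θ'))) θ -
      fderiv ℝ (fderiv ℝ (fun θ' => Real.log (f z θ'))) θ‖ ≤ K := by
    intro z θ hθ
    rw [hessian_log_eq (ft z) (hftd z) (hftd2 z) θ (lt_of_lt_of_le hδ0 (hft z θ hθ)),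
        hessian_log_eq (f z) (hfd z) (hfd2 z) θ (lt_of_lt_of_le hδ0 (hf z θ hθ))]
    have hu : ‖fderiv ℝ (f z) θ‖ ≤ M1 := by
      rw [← norm_gradient_eq]
      exact le_csSup hM1 ⟨z, θ, hθ, rfl⟩
    have hA : ‖fderiv ℝ (fderiv ℝ (f z)) θ‖ ≤ M2 := le_csSup hM2 ⟨z, θ, hθ, rfl⟩
    have h0 : |ft z θ - f z θ| ≤ e0 := le_csSup hbdd0 ⟨z, θ, hθ, rfl⟩
    have h1 : ‖fderiv ℝ (ft z) θ - fderiv ℝ (f z) θ‖ ≤ e1 := by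
      rw [← norm_gradient_sub_eq]
      exact le_csSup hbdd1 ⟨z, θ, hθ, rfl⟩
    have h2 : ‖fderiv ℝ (fderiv ℝ (ft z)) θ - fderiv ℝ (fderiv ℝ (f z)) θ‖ ≤ e2 :=
      le_csSup hbdd2 ⟨z, θ, hθ, rfl⟩
    exact key_bound (f z θ) (ft z θ) (fderiv ℝ (f z) θ) (fderiv ℝ (ft z) θ)
      (fderiv ℝ (fderiv ℝ (f z)) θ) (fderiv ℝ (fderiv ℝ (ft z)) θ)
      δ M1 M2 e0 e1 e2 hδ0 hδ1 (hf z θ hθ) (hft z θ hθ) hu hA h0 h1 h2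
  obtain ⟨z₀⟩ := (inferInstance : Nonempty Z)
  have hK0 : 0 ≤ K := le_trans (by positivity) (hpt z₀ θ₀ hθ₀)
  apply Real.sSup_le _ hK0
  rintro x ⟨θ, hθ, rfl⟩
  simp only
  have inst : NormSMulClass ℝ (EuclideanSpace ℝ (Fin p) →L[ℝ] EuclideanSpace ℝ (Fin p) →L[ℝ] ℝ) :=
    NormedSpace.toNormSMulClass (𝕜 := ℝ) (E := EuclideanSpace ℝ (Fin p) →L[ℝ] EuclideanSpace ℝ (Fin p) →L[ℝ] ℝ)
  rw [← smul_sub ((n : ℝ)⁻¹) (∑ i, fderiv ℝ (fderiv ℝ (fun θ' => Real.log (ft (zi i) θ'))) θ)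
    (∑ i, fderiv ℝ (fderiv ℝ (fun θ' => Real.log (f (zi i) θ'))) θ), ← Finset.sum_sub_distrib, norm_smul]
  have hn0 : (0:ℝ) < n := by exact_mod_cast Nat.lt_of_lt_of_le Nat.zero_lt_one hn
  have hnorm : ‖∑ i, (fderiv ℝ (fderiv ℝ (fun θ' => Real.log (ft (zi i) θ'))) θ -
      fderiv ℝ (fderiv ℝ (fun θ' => Real.log (f (zi i) θ'))) θ)‖ ≤ n * K := by
    calc ‖∑ i, (fderiv ℝ (fderiv ℝ (fun θ' => Real.log (ft (zi i) θ'))) θ -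
        fderiv ℝ (fderiv ℝ (fun θ' => Real.log (f (zi i) θ'))) θ)‖
        ≤ ∑ i, ‖fderiv ℝ (fderiv ℝ (fun θ' => Real.log (ft (zi i) θ'))) θ -
            fderiv ℝ (fderiv ℝ (fun θ' => Real.log (f (zi i) θ'))) θ‖ :=
          norm_sum_le Finset.univ (fun i => fderiv ℝ (fderiv ℝ (fun θ' => Real.log (ft (zi i) θ'))) θ -
            fderiv ℝ (fderiv ℝ (fun θ' => Real.log (f (zi i) θ'))) θ)
      _ ≤ ∑ _i : Fin n, K := Finset.sum_le_sum fun i _ => hpt (zi i) θ hθ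
      _ = n * K := by
          rw [Finset.sum_const, Finset.card_univ, Fintype.card_fin, nsmul_eq_mul]
  calc ‖(n:ℝ)⁻¹‖ * ‖∑ i, (fderiv ℝ (fderiv ℝ (fun θ' => Real.log (ft (zi i) θ'))) θ -
        fderiv ℝ (fderiv ℝ (fun θ' => Real.log (f (zi i) θ'))) θ)‖
      ≤ (n:ℝ)⁻¹ * (n * K) := by
        rw [Real.norm_eq_abs, abs_of_nonneg (by positivity)]
        exact mul_le_mul_of_nonneg_left hnorm (by positivity)
    _ = K := by field_simp
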